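/- Let M be a 2×2 complex matrix satisfying M J M* = J, where J = [[0,-1],[1,0]]. Then |det(M)| = 1, and there exist a real number φ and a 2×2 complex matrix F all of whose entries are real with det(F) = 1 such that M = e^{iφ} F. -/

import Mathlib

open Matrix

/-- The matrix `J = [[0,-1],[1,0]]`. -/
def Jmat : Matrix (Fin 2) (Fin 2) ℂ := !![0, -1; 1, 0]

/-- Any complex symplectic `2×2` matrix (`M J Mᴴ = J`) has `|det M| = 1` and is a
unimodular scalar multiple of a real matrix with determinant 1. -/
theorem symplectic_eq_unimodular_smul_SL2R (M : Matrix (Fin 2) (Fin 2) ℂ)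
    (h : M * Jmat * Mᴴ = Jmat) :
    ‖M.det‖ = 1 ∧
    ∃ (φ : ℝ) (F : Matrix (Fin 2) (Fin 2) ℂ),
      (∀ i j, (F i j).im = 0) ∧ F.det = 1 ∧
      M = Complex.exp ((φ : ℂ) * Complex.I) • F := by
  set a := M 0 0 with ha
  set b := M 0 1 with hb
  set c := M 1 0 with hc
  set d := M 1 1 with hd
  have hij := Matrix.ext_iff.mpr h
  have h00 := hij 0 0
  have h01 := hij 0 1
  have h10 := hij 1 0
  have h11 := hij 1 1
  simp [Jmat, Matrix.mul_apply, Fin.sum_univ_two, Matrix.conjTranspose_apply,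
    RCLike.star_def, ← ha, ← hb, ← hc, ← hd] at h00 h01 h10 h11
  set a' := (starRingEnd ℂ) a with ha'
  set b' := (starRingEnd ℂ) b with hb'
  set c' := (starRingEnd ℂ) c with hc'
  set d' := (starRingEnd ℂ) d with hd'
  have hdet : M.det = a * d - b * c := by rw [Matrix.det_fin_two]
  set Δ := M.det with hΔ
  -- each entry x satisfies x = Δ * conj x
  have hka : a = Δ * a' := by rw [hdet]; linear_combination (-a) * h10 + c * h00
  have hkb : b = Δ * b' := by rw [hdet]; linear_combination (-b) * h10 + d * h00
  have hkc : c = Δ * c' := by rw [hdet]; linear_combination c * h01 - a * h11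
  have hkd : d = Δ * d' := by rw [hdet]; linear_combination d * h01 - b * h11
  have hΔconj : (starRingEnd ℂ) Δ = a' * d' - b' * c' := by
    rw [hdet]; simp [ha', hb', hc', hd']
  have hunit : Δ * (starRingEnd ℂ) Δ = 1 := by
    rw [hΔconj]
    calc Δ * (a' * d' - b' * c') = (Δ * a') * d' - (Δ * b') * c' := by ring
    _ = a * d' - b * c' := by rw [← hka, ← hkb]
    _ = 1 := by linear_combination -h01
  have habs : ‖Δ‖ = 1 := by
    have h2 : ‖Δ‖ * ‖Δ‖ = 1 := by
      have := congrArg norm hunit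
      rwa [norm_mul, Complex.norm_conj, norm_one] at this
    nlinarith [norm_nonneg Δ]
  set φ : ℝ := Δ.arg / 2 with hφ
  set u := Complex.exp ((φ : ℂ) * Complex.I) with huu
  set v := Complex.exp (-(φ : ℂ) * Complex.I) with hvv
  have huv : u * v = 1 := by
    rw [huu, hvv, ← Complex.exp_add]
    ring_nf
    exact Complex.exp_zero
  have hu : u * u = Δ := by
    rw [huu, ← Complex.exp_add]
    have e : (φ : ℂ) * Complex.I + (φ : ℂ) * Complex.I = (Δ.arg : ℂ) * Complex.I := by
      rw [hφ]; push_cast; ring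
    rw [e]
    have := Complex.norm_mul_exp_arg_mul_I Δ
    rwa [habs, Complex.ofReal_one, one_mul] at this
  have huconj : (starRingEnd ℂ) v = u := by
    rw [hvv, ← Complex.exp_conj, huu]
    congr 1
    simp [Complex.conj_I]
  refine ⟨habs, φ, v • M, ?_, ?_, ?_⟩
  · intro i j
    have hx : M i j = Δ * (starRingEnd ℂ) (M i j) := by
      fin_cases i <;> fin_cases j <;> first | exact hka | exact hkb | exact hkc | exact hkd
    have : (starRingEnd ℂ) (v * M i j) = v * M i j := by
      rw [_root_.map_mul, huconj]
      calc u * (starRingEnd ℂ) (M i j) = (v * u) * (u * (starRingEnd ℂ) (M i j)) := by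
            rw [mul_comm v u, huv, one_mul]
      _ = v * (Δ * (starRingEnd ℂ) (M i j)) := by rw [← hu]; ring
      _ = v * M i j := by rw [← hx]
    have := Complex.conj_eq_iff_im.mp this
    simpa using this
  · rw [Matrix.det_smul, ← hΔ]
    simp only [Fintype.card_fin]
    calc v ^ 2 * Δ = v ^ 2 * (u * u) := by rw [hu]
    _ = (u * v) * (u * v) := by ring
    _ = 1 := by rw [huv]; ring
  · rw [← huu, smul_smul, huv, one_smul]
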